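/- Let φ' : (0,∞) → (0,∞) be strictly decreasing with (φ')⁻¹(x·y) = (φ')⁻¹(x)·(φ')⁻¹(y), and suppose (φ')⁻¹(1/2^n) > 1 for some n ≥ 1. Let C₀ > 0, k ≥ 1, and q = C₀·((φ')⁻¹(1/2^n) − 1). If C satisfies 0 < C − k·q < C₀, then φ'((C − (k−1)·q)/(C − k·q)) < 1/2^n. -/
import Mathlib


open Real

theorem stmt_19 (f g : ℝ → ℝ)
    (hf : StrictAntiOn f (Set.Ioi 0))
    (hfpos : ∀ x > 0, 0 < f x)
    (hgpos : ∀ x > 0, 0 < g x)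
    (hgf : ∀ x > 0, g (f x) = x)
    (hfg : ∀ x > 0, f (g x) = x)
    (hmul : ∀ x > 0, ∀ y > 0, g (x * y) = g x * g y)
    (n k : ℕ) (hn : 1 ≤ n) (hk : 1 ≤ k)
    (hg1 : 1 < g (1 / 2 ^ n))
    (C₀ : ℝ) (hC₀ : 0 < C₀)
    (q : ℝ) (hq : q = C₀ * (g (1 / 2 ^ n) - 1))
    (C : ℝ) (hCk : 0 < C - k * q) (hCk' : C - k * q < C₀) :
    f ((C - ((k : ℝ) - 1) * q) / (C - k * q)) < 1 / 2 ^ n := by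
  have hpow : (0:ℝ) < 1 / 2 ^ n := by positivity
  have hratio : g (1 / 2 ^ n) < (C - ((k : ℝ) - 1) * q) / (C - k * q) := by
    rw [lt_div_iff₀ hCk]
    nlinarith [mul_pos (sub_pos.mpr hg1) (sub_pos.mpr hCk')]
  have hgmem : g (1 / 2 ^ n) ∈ Set.Ioi (0:ℝ) := hgpos _ hpow
  have hrmem : (C - ((k : ℝ) - 1) * q) / (C - k * q) ∈ Set.Ioi (0:ℝ) :=
    lt_trans (hgpos _ hpow) hratio
  have := hf hgmem hrmem hratio
  rwa [hfg _ hpow] at this
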